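/- Let 2^m < n ≤ 2^{m+1}. Then the Walsh-Nörlund kernel satisfies Q_n F_n^w = Q_n D_{2^m} − w_{2^m−1} Σ_{l=1}^{2^m−2} (q_{n−2^m+l} − q_{n−2^m+l+1})·l·K_l^w − w_{2^m−1}·(2^m−1)·q_{n−1}·K_{2^m−1}^w + w_{2^m}·Q_{n−2^m}·F_{n−2^m}^w, as functions on the dyadic group G. -/

import Mathlib

open Finset

/-- The dyadic (Walsh) group `G = ∏_{k ∈ ℕ} ℤ₂` with coordinatewise mod-2 addition. -/
abbrev G : Type := ℕ → ZMod 2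

/-- The Walsh function `w_n(x) = ∏_k r_k(x)^{n_k} = (-1)^{Σ_k n_k x_k}`,
where `n = Σ_k n_k 2^k` in binary and `r_k(x) = (-1)^{x_k}`. -/
noncomputable def walsh (n : ℕ) (x : G) : ℝ :=
  (-1 : ℝ) ^ (∑ k ∈ Finset.range n.size, (n.testBit k).toNat * (x k).val)

/-- The Walsh–Dirichlet kernel `D_n = Σ_{i=0}^{n-1} w_i` (so `D_0 = 0`). -/
noncomputable def dirichlet (n : ℕ) (x : G) : ℝ :=
  ∑ i ∈ Finset.range n, walsh i x

/-- The Walsh–Fejér kernel `K_n^w = n^{-1} Σ_{k=1}^n D_k`. -/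
noncomputable def fejerKernel (n : ℕ) (x : G) : ℝ :=
  (n : ℝ)⁻¹ * ∑ k ∈ Finset.Icc 1 n, dirichlet k x

/-- `Q_n = Σ_{k=0}^{n-1} q_k`. -/
def Qn (q : ℕ → ℝ) (n : ℕ) : ℝ := ∑ k ∈ Finset.range n, q k

/-- The Walsh–Nörlund kernel `F_n^w = Q_n^{-1} Σ_{k=1}^n q_{n-k} D_k`. -/
noncomputable def norlundKernel (q : ℕ → ℝ) (n : ℕ) (x : G) : ℝ :=
  (Qn q n)⁻¹ * ∑ k ∈ Finset.Icc 1 n, q (n - k) * dirichlet k x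

lemma walsh_eq_of_lt {n K : ℕ} (hK : n < 2 ^ K) (x : G) :
    walsh n x = (-1 : ℝ) ^ (∑ k ∈ Finset.range K, (n.testBit k).toNat * (x k).val) := by
  unfold walsh
  congr 1
  apply Finset.sum_subset (Finset.range_subset_range.2 (Nat.size_le.2 hK))
  intro k _ hk
  simp only [Finset.mem_range, not_lt] at hk
  rw [Nat.testBit_lt_two_pow (Nat.size_le.1 hk)]
  simp

lemma walsh_xor (a b : ℕ) (x : G) : walsh (a ^^^ b) x = walsh a x * walsh b x := by
  set K := max a.size b.size with hK
  have ha : a < 2 ^ K := Nat.size_le.1 (le_max_left _ _)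
  have hb : b < 2 ^ K := Nat.size_le.1 (le_max_right _ _)
  have hx : a ^^^ b < 2 ^ K := Nat.xor_lt_two_pow ha hb
  rw [walsh_eq_of_lt ha, walsh_eq_of_lt hb, walsh_eq_of_lt hx, ← pow_add,
    neg_one_pow_eq_pow_mod_two, neg_one_pow_eq_pow_mod_two (R := ℝ)
      (n := (∑ k ∈ Finset.range K, (a.testBit k).toNat * (x k).val) +
        ∑ k ∈ Finset.range K, (b.testBit k).toNat * (x k).val)]
  congr 1
  rw [← Finset.sum_add_distrib, Finset.sum_nat_mod, Finset.sum_nat_mod (f := fun k =>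
    (a.testBit k).toNat * (x k).val + (b.testBit k).toNat * (x k).val)]
  congr 1
  apply Finset.sum_congr rfl
  intro k _
  rw [Nat.testBit_xor]
  cases ha' : a.testBit k <;> cases hb' : b.testBit k <;> simp <;> omega

lemma two_pow_add_eq_xor {m i : ℕ} (h : i < 2 ^ m) : 2 ^ m + i = 2 ^ m ^^^ i := by
  apply Nat.eq_of_testBit_eq
  intro k
  rcases lt_trichotomy k m with hk | rfl | hk
  · rw [Nat.testBit_two_pow_add_gt hk, Nat.testBit_xor,
      Nat.testBit_two_pow_of_ne (by omega)]
    simp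
  · rw [Nat.testBit_two_pow_add_eq, Nat.testBit_xor, Nat.testBit_two_pow_self]
    simp
  · have h1 : 2 ^ m + i < 2 ^ k := by
      calc 2 ^ m + i < 2 ^ m + 2 ^ m := by omega
      _ = 2 ^ (m + 1) := by ring
      _ ≤ 2 ^ k := Nat.pow_le_pow_right (by norm_num) hk
    rw [Nat.testBit_lt_two_pow h1, Nat.testBit_xor, Nat.testBit_two_pow_of_ne (by omega),
      Nat.testBit_lt_two_pow (lt_of_lt_of_le h (Nat.pow_le_pow_right (by norm_num) hk.le))]
    rfl

lemma two_pow_sub_eq_xor {m i : ℕ} (h : i < 2 ^ m) : 2 ^ m - 1 - i = (2 ^ m - 1) ^^^ i := by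
  apply Nat.eq_of_testBit_eq
  intro k
  have h' : 2 ^ m - 1 - i = 2 ^ m - (i + 1) := by omega
  rw [h', Nat.testBit_two_pow_sub_succ h, Nat.testBit_xor, Nat.testBit_two_pow_sub_one]
  by_cases hk : k < m
  · simp [hk]
  · have : i < 2 ^ k := lt_of_lt_of_le h (Nat.pow_le_pow_right (by norm_num) (not_lt.1 hk))
    simp [hk, Nat.testBit_lt_two_pow this]

lemma walsh_two_pow_add {m i : ℕ} (h : i < 2 ^ m) (x : G) :
    walsh (2 ^ m + i) x = walsh (2 ^ m) x * walsh i x := by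
  rw [two_pow_add_eq_xor h, walsh_xor]

lemma walsh_two_pow_sub {m i : ℕ} (h : i < 2 ^ m) (x : G) :
    walsh (2 ^ m - 1 - i) x = walsh (2 ^ m - 1) x * walsh i x := by
  rw [two_pow_sub_eq_xor h, walsh_xor]

lemma dirichlet_two_pow_add {m j : ℕ} (h : j ≤ 2 ^ m) (x : G) :
    dirichlet (2 ^ m + j) x = dirichlet (2 ^ m) x + walsh (2 ^ m) x * dirichlet j x := by
  unfold dirichlet
  rw [Finset.range_eq_Ico, ← Finset.sum_Ico_consecutive _ (Nat.zero_le (2 ^ m))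
    (Nat.le_add_right _ _), ← Finset.range_eq_Ico, Finset.mul_sum]
  congr 1
  rw [Finset.sum_Ico_eq_sum_range, Nat.add_sub_cancel_left]
  apply Finset.sum_congr rfl
  intro i hi
  exact walsh_two_pow_add (lt_of_lt_of_le (Finset.mem_range.1 hi) h) x

lemma dirichlet_two_pow_sub {m j : ℕ} (h : j ≤ 2 ^ m) (x : G) :
    dirichlet (2 ^ m - j) x = dirichlet (2 ^ m) x - walsh (2 ^ m - 1) x * dirichlet j x := by
  have key : dirichlet (2 ^ m) x =
      dirichlet (2 ^ m - j) x + walsh (2 ^ m - 1) x * dirichlet j x := by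
    unfold dirichlet
    rw [Finset.range_eq_Ico, ← Finset.sum_Ico_consecutive _ (Nat.zero_le (2 ^ m - j))
      (Nat.sub_le _ _), Finset.mul_sum, ← Finset.range_eq_Ico]
    congr 1
    rw [Finset.sum_Ico_eq_sum_range]
    have hj : 2 ^ m - (2 ^ m - j) = j := by omega
    rw [hj]
    calc ∑ k ∈ Finset.range j, walsh (2 ^ m - j + k) x
        = ∑ k ∈ Finset.range j, walsh (2 ^ m - 1 - (j - 1 - k)) x := by
          apply Finset.sum_congr rfl
          intro t ht
          have ht' := Finset.mem_range.1 ht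
          have e : 2 ^ m - 1 - (j - 1 - t) = 2 ^ m - j + t := by
            have := Nat.one_le_two_pow (n := m)
            omega
          rw [e]
      _ = ∑ k ∈ Finset.range j, walsh (2 ^ m - 1 - k) x :=
          Finset.sum_range_reflect (fun l => walsh (2 ^ m - 1 - l) x) j
      _ = ∑ i ∈ Finset.range j, walsh (2 ^ m - 1) x * walsh i x := by
          apply Finset.sum_congr rfl
          intro t ht
          exact walsh_two_pow_sub (lt_of_lt_of_le (Finset.mem_range.1 ht) h) x
  rw [key]; ring

lemma abel_sum (a D : ℕ → ℝ) (M : ℕ) :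
    ∑ j ∈ Finset.Icc 1 M, a j * D j =
      (∑ l ∈ Finset.Icc 1 (M - 1), (a l - a (l + 1)) * ∑ j ∈ Finset.Icc 1 l, D j)
        + a M * ∑ j ∈ Finset.Icc 1 M, D j := by
  induction M with
  | zero => simp
  | succ M ih =>
    rcases Nat.eq_zero_or_pos M with rfl | hM
    · simp
    · have hM' : M - 1 + 1 = M := by omega
      have e1 : ∑ l ∈ Finset.Icc 1 M, ((a l - a (l + 1)) * ∑ j ∈ Finset.Icc 1 l, D j)
          = (∑ l ∈ Finset.Icc 1 (M - 1), (a l - a (l + 1)) * ∑ j ∈ Finset.Icc 1 l, D j)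
            + (a M - a (M + 1)) * ∑ j ∈ Finset.Icc 1 M, D j := by
        conv_lhs => rw [← hM']
        rw [Finset.sum_Icc_succ_top (by omega : 1 ≤ M - 1 + 1), hM']
      have e2 : ∑ j ∈ Finset.Icc 1 (M + 1), D j
          = (∑ j ∈ Finset.Icc 1 M, D j) + D (M + 1) :=
        Finset.sum_Icc_succ_top (by omega) _
      rw [Finset.sum_Icc_succ_top (by omega : 1 ≤ M + 1), ih, Nat.succ_sub_one, e1, e2]
      ring

lemma nat_mul_fejer (l : ℕ) (x : G) :
    (l : ℝ) * fejerKernel l x = ∑ j ∈ Finset.Icc 1 l, dirichlet j x := by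
  unfold fejerKernel
  rcases Nat.eq_zero_or_pos l with rfl | hl
  · simp
  · rw [← mul_assoc, mul_inv_cancel₀ (Nat.cast_ne_zero.2 (by omega)), one_mul]

lemma Qn_mul_norlund (q : ℕ → ℝ) (hnn : ∀ k, 0 ≤ q k) (r : ℕ) (x : G) :
    Qn q r * norlundKernel q r x = ∑ k ∈ Finset.Icc 1 r, q (r - k) * dirichlet k x := by
  unfold norlundKernel
  rcases eq_or_ne (Qn q r) 0 with h0 | h0
  · rw [h0, zero_mul]
    symm
    apply Finset.sum_eq_zero
    intro k hk
    rw [Finset.mem_Icc] at hk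
    have : q (r - k) = 0 := by
      have := (Finset.sum_eq_zero_iff_of_nonneg (fun i _ => hnn i)).1 h0 (r - k)
        (Finset.mem_range.2 (by omega))
      exact this
    rw [this, zero_mul]
  · rw [← mul_assoc, mul_inv_cancel₀ h0, one_mul]

/-- Lemma 2: for `2^m < n ≤ 2^{m+1}`,
`Q_n F_n^w = Q_n D_{2^m} − w_{2^m−1} Σ_{l=1}^{2^m−2} (q_{n−2^m+l} − q_{n−2^m+l+1}) l K_l^w
 − w_{2^m−1} (2^m−1) q_{n−1} K_{2^m−1}^w + w_{2^m} Q_{n−2^m} F_{n−2^m}^w`. -/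
theorem norlundKernel_decomposition (q : ℕ → ℝ) (hnn : ∀ k, 0 ≤ q k)
    (m n : ℕ) (h1 : 2 ^ m < n) (h2 : n ≤ 2 ^ (m + 1)) (hQ : 0 < Qn q n) (x : G) :
    Qn q n * norlundKernel q n x =
      Qn q n * dirichlet (2 ^ m) x
        - walsh (2 ^ m - 1) x *
            ∑ l ∈ Finset.Icc 1 (2 ^ m - 2),
              (q (n - 2 ^ m + l) - q (n - 2 ^ m + l + 1)) * l * fejerKernel l x
        - walsh (2 ^ m - 1) x * (((2 ^ m - 1 : ℕ) : ℝ) * q (n - 1) * fejerKernel (2 ^ m - 1) x)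
        + walsh (2 ^ m) x * (Qn q (n - 2 ^ m) * norlundKernel q (n - 2 ^ m) x) := by
  have hN1 : 1 ≤ 2 ^ m := Nat.one_le_two_pow
  have hpow : 2 ^ (m + 1) = 2 ^ m + 2 ^ m := by ring
  set r := n - 2 ^ m with hr
  have hr1 : 1 ≤ r := by omega
  have hr2 : r ≤ 2 ^ m := by omega
  have hn : n = 2 ^ m + r := by omega
  have IccIoc : ∀ t : ℕ, Finset.Icc 1 t = Finset.Ioc 0 t := by
    intro t; ext y; simp; omega
  rw [Qn_mul_norlund q hnn n x, Qn_mul_norlund q hnn r x]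
  -- reversed Q-sum
  have Qrev : ∀ t : ℕ, ∑ j ∈ Finset.Icc 1 t, q (t - j) = Qn q t := by
    intro t
    rw [← Finset.Ico_add_one_right_eq_Icc, Finset.sum_Ico_eq_sum_range, Nat.add_sub_cancel]
    calc ∑ k ∈ Finset.range t, q (t - (1 + k))
        = ∑ k ∈ Finset.range t, q (t - 1 - k) := by
          apply Finset.sum_congr rfl; intro k _; congr 1; omega
      _ = ∑ k ∈ Finset.range t, q k := Finset.sum_range_reflect q t
      _ = Qn q t := rfl
  -- split the main sum
  have split : ∑ k ∈ Finset.Icc 1 n, q (n - k) * dirichlet k x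
      = (∑ k ∈ Finset.Icc 1 (2 ^ m), q (n - k) * dirichlet k x)
        + ∑ j ∈ Finset.Icc 1 r, q (r - j) * dirichlet (2 ^ m + j) x := by
    rw [IccIoc n, IccIoc (2 ^ m), IccIoc r,
      ← Finset.sum_Ioc_consecutive _ (Nat.zero_le (2 ^ m)) (le_of_lt h1)]
    congr 1
    rw [hn, show Finset.Ioc (2 ^ m) (2 ^ m + r)
        = Finset.map (addLeftEmbedding (2 ^ m)) (Finset.Ioc 0 r) by
          rw [map_add_left_Ioc, add_zero],
      Finset.sum_map]
    apply Finset.sum_congr rfl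
    intro j hj
    have hj' := Finset.mem_Ioc.1 hj
    simp only [addLeftEmbedding_apply]
    congr 2
    omega
  -- second chunk
  have B : ∑ j ∈ Finset.Icc 1 r, q (r - j) * dirichlet (2 ^ m + j) x
      = Qn q r * dirichlet (2 ^ m) x
        + walsh (2 ^ m) x * ∑ j ∈ Finset.Icc 1 r, q (r - j) * dirichlet j x := by
    calc ∑ j ∈ Finset.Icc 1 r, q (r - j) * dirichlet (2 ^ m + j) x
        = ∑ j ∈ Finset.Icc 1 r, (q (r - j) * dirichlet (2 ^ m) x
            + walsh (2 ^ m) x * (q (r - j) * dirichlet j x)) := by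
          apply Finset.sum_congr rfl
          intro j hj
          have hj' := Finset.mem_Icc.1 hj
          rw [dirichlet_two_pow_add (le_trans hj'.2 hr2) x]
          ring
      _ = _ := by
          rw [Finset.sum_add_distrib, ← Finset.sum_mul, ← Finset.mul_sum, Qrev r]
  -- Q sum for first chunk
  have Qsum : ∑ j ∈ Finset.range (2 ^ m), q (r + j) = Qn q n - Qn q r := by
    have : Qn q n = Qn q r + ∑ j ∈ Finset.range (2 ^ m), q (r + j) := by
      unfold Qn
      rw [show n = r + 2 ^ m by omega, Finset.sum_range_add]
    linarith
  -- first chunk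
  have C : ∑ k ∈ Finset.Icc 1 (2 ^ m), q (n - k) * dirichlet k x
      = (Qn q n - Qn q r) * dirichlet (2 ^ m) x
        - walsh (2 ^ m - 1) x * ∑ j ∈ Finset.Icc 1 (2 ^ m - 1), q (r + j) * dirichlet j x := by
    have reindex : ∑ k ∈ Finset.Icc 1 (2 ^ m), q (n - k) * dirichlet k x
        = ∑ j ∈ Finset.range (2 ^ m), q (n - (2 ^ m - j)) * dirichlet (2 ^ m - j) x := by
      rw [← Finset.Ico_add_one_right_eq_Icc, Finset.sum_Ico_eq_sum_range, Nat.add_sub_cancel]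
      rw [← Finset.sum_range_reflect
        (fun i => q (n - (1 + i)) * dirichlet (1 + i) x) (2 ^ m)]
      apply Finset.sum_congr rfl
      intro j hj
      have hj' := Finset.mem_range.1 hj
      have e : 1 + (2 ^ m - 1 - j) = 2 ^ m - j := by omega
      simp only [e]
    have drop0 : ∑ j ∈ Finset.range (2 ^ m), q (r + j) * dirichlet j x
        = ∑ j ∈ Finset.Icc 1 (2 ^ m - 1), q (r + j) * dirichlet j x := by
      rw [show 2 ^ m = (2 ^ m - 1) + 1 by omega, Finset.sum_range_succ']
      have d0 : dirichlet 0 x = 0 := by simp [dirichlet]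
      rw [d0, mul_zero, add_zero, ← Finset.Ico_add_one_right_eq_Icc, Finset.sum_Ico_eq_sum_range,
        Nat.add_sub_cancel]
      apply Finset.sum_congr rfl
      intro k _
      rw [add_comm 1 k]
    calc ∑ k ∈ Finset.Icc 1 (2 ^ m), q (n - k) * dirichlet k x
        = ∑ j ∈ Finset.range (2 ^ m), q (n - (2 ^ m - j)) * dirichlet (2 ^ m - j) x :=
          reindex
      _ = ∑ j ∈ Finset.range (2 ^ m), (q (r + j) * dirichlet (2 ^ m) x
            - walsh (2 ^ m - 1) x * (q (r + j) * dirichlet j x)) := by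
          apply Finset.sum_congr rfl
          intro j hj
          have hj' := Finset.mem_range.1 hj
          rw [dirichlet_two_pow_sub (by omega : j ≤ 2 ^ m) x,
            show n - (2 ^ m - j) = r + j by omega]
          ring
      _ = (∑ j ∈ Finset.range (2 ^ m), q (r + j)) * dirichlet (2 ^ m) x
            - walsh (2 ^ m - 1) x * ∑ j ∈ Finset.range (2 ^ m), q (r + j) * dirichlet j x := by
          rw [Finset.sum_sub_distrib, ← Finset.sum_mul, ← Finset.mul_sum]
      _ = _ := by rw [Qsum, drop0]
  -- Abel summation on the inner sum
  have D : ∑ j ∈ Finset.Icc 1 (2 ^ m - 1), q (r + j) * dirichlet j x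
      = (∑ l ∈ Finset.Icc 1 (2 ^ m - 2),
          (q (r + l) - q (r + l + 1)) * ((l : ℝ) * fejerKernel l x))
        + q (r + (2 ^ m - 1)) * (((2 ^ m - 1 : ℕ) : ℝ) * fejerKernel (2 ^ m - 1) x) := by
    rw [abel_sum (fun j => q (r + j)) (fun j => dirichlet j x) (2 ^ m - 1),
      show 2 ^ m - 1 - 1 = 2 ^ m - 2 by omega]
    congr 1
    · apply Finset.sum_congr rfl
      intro l _
      rw [nat_mul_fejer, Nat.add_assoc]
    · rw [nat_mul_fejer]
  have sumshape : ∑ l ∈ Finset.Icc 1 (2 ^ m - 2),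
        (q (r + l) - q (r + l + 1)) * (l : ℝ) * fejerKernel l x
      = ∑ l ∈ Finset.Icc 1 (2 ^ m - 2),
        (q (r + l) - q (r + l + 1)) * ((l : ℝ) * fejerKernel l x) := by
    apply Finset.sum_congr rfl
    intro l _
    ring
  rw [split, B, C, D, sumshape, show n - 1 = r + (2 ^ m - 1) by omega]
  ring
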